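/- Let H(x) = tanh(x/√2), λ₀ = i·√(3/2) ∈ ℂ, and fix a sign ε ∈ {+1, −1}. Define M₄(t,x) = tanh(x/√2)·e^{i√2·t} and N₄(t,x) = (−2i − ε·√2·λ₀)·e^{i√2·t}. Then (M₄, N₄) satisfies, for all (t,x) ∈ ℝ², the system ∂_x M₄ − ∂_t N₄ = −(1/√2)·H(x)·M₄ − ε·λ₀·N₄ and ∂_t M₄ − ∂_x N₄ = −(1/√2)·H(x)·N₄ − ε·λ₀·M₄. (The odd resonance of the dual φ⁴ operator is linked by this second linearized Bäcklund transformation to the constant-in-space resonance N₄ of the free Klein-Gordon operator with mass 2.) -/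

import Mathlib

/-- The φ⁴ kink. -/
noncomputable def phi4Kink (x : ℝ) : ℝ := Real.tanh (x / Real.sqrt 2)

/-- The time-periodic resonance of the dual φ⁴ operator 𝓛̃_H at λ = 2. -/
noncomputable def M₄c (t x : ℝ) : ℂ :=
  (Real.tanh (x / Real.sqrt 2) : ℂ) * Complex.exp (Complex.I * (Real.sqrt 2 : ℂ) * (t : ℂ))

lemma my_hasDerivAt_tanh (x : ℝ) : HasDerivAt Real.tanh (1 - Real.tanh x ^ 2) x := by
  have hc := Real.cosh_pos x
  have h : HasDerivAt (fun y => Real.sinh y / Real.cosh y)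
      ((Real.cosh x * Real.cosh x - Real.sinh x * Real.sinh x) / Real.cosh x ^ 2) x :=
    (Real.hasDerivAt_sinh x).div (Real.hasDerivAt_cosh x) hc.ne'
  convert h using 1
  · funext y; exact (Real.tanh_eq_sinh_div_cosh y).symm ▸ rfl
  · rw [Real.tanh_eq_sinh_div_cosh]
    have : Real.cosh x ^ 2 - Real.sinh x ^ 2 = 1 := Real.cosh_sq_sub_sinh_sq x
    field_simp

/-- (M₄, N₄) with N₄ = (−2i − ε√2·λ₀)e^{i√2 t} satisfies the second
linearized Bäcklund system for φ⁴ with λ₀ = i√(3/2). -/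
theorem dual_resonance_second_linearized_backlund
    (ε : ℝ) (hε : ε = 1 ∨ ε = -1)
    (lam₀ : ℂ) (hlam₀ : lam₀ = Complex.I * (Real.sqrt (3 / 2) : ℂ))
    (N₄ : ℝ → ℝ → ℂ)
    (hN₄ : ∀ t x : ℝ, N₄ t x
      = (-2 * Complex.I - (ε : ℂ) * (Real.sqrt 2 : ℂ) * lam₀)
          * Complex.exp (Complex.I * (Real.sqrt 2 : ℂ) * (t : ℂ))) :
    ∀ t x : ℝ,
      deriv (fun x' => M₄c t x') x - deriv (fun t' => N₄ t' x) t
        = -(1 / Real.sqrt 2 : ℝ) * (phi4Kink x : ℂ) * M₄c t x - (ε : ℂ) * lam₀ * N₄ t x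
      ∧ deriv (fun t' => M₄c t' x) t - deriv (fun x' => N₄ t x') x
        = -(1 / Real.sqrt 2 : ℝ) * (phi4Kink x : ℂ) * N₄ t x - (ε : ℂ) * lam₀ * M₄c t x := by
  intro t x
  set a : ℝ := Real.sqrt 2 with ha_def
  have ha : (a : ℂ) * a = 2 := by
    have : (Real.sqrt 2) * (Real.sqrt 2) = 2 := Real.mul_self_sqrt (by norm_num)
    rw [ha_def]; exact_mod_cast this
  have ha0 : (a : ℂ) ≠ 0 := by
    intro h
    rw [h, mul_zero] at ha; norm_num at ha
  have hb : ((Real.sqrt (3/2) : ℝ) : ℂ) * (Real.sqrt (3/2) : ℂ) = 3/2 := by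
    rw [← Complex.ofReal_mul, Real.mul_self_sqrt (by norm_num)]; norm_num
  have he : (ε : ℂ) * ε = 1 := by
    rcases hε with h | h <;> simp [h]
  set E : ℂ := Complex.exp (Complex.I * (a : ℂ) * (t : ℂ)) with hE
  set T : ℝ := Real.tanh (x / a) with hT
  -- derivative of M₄c in x
  have hMx : deriv (fun x' => M₄c t x') x = (((1 - T ^ 2) * a⁻¹ : ℝ) : ℂ) * E := by
    have h1 : HasDerivAt (fun x' : ℝ => Real.tanh (x' / a)) ((1 - T ^ 2) * a⁻¹) x := by
      have := (my_hasDerivAt_tanh (x / a)).comp x ((hasDerivAt_id x).div_const a)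
      simpa [hT, div_eq_mul_inv, Function.comp_def] using this
    exact ((h1.ofReal_comp).mul_const E).deriv
  -- derivative of M₄c in t
  have hMt : deriv (fun t' => M₄c t' x) t = (T : ℂ) * (Complex.I * a * E) := by
    have h2 : HasDerivAt (fun z : ℂ => Complex.exp (Complex.I * (a : ℂ) * z))
        (Complex.I * a * E) (t : ℂ) := by
      simpa [hE, mul_comm] using ((hasDerivAt_id (t : ℂ)).const_mul (Complex.I * (a : ℂ))).cexp
    have h3 := (h2.comp_ofReal).const_mul (T : ℂ)
    exact h3.deriv
  -- derivative of N₄ in t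
  set C : ℂ := -2 * Complex.I - (ε : ℂ) * (a : ℂ) * lam₀ with hC
  have hNt : deriv (fun t' => N₄ t' x) t = C * (Complex.I * a * E) := by
    have h2 : HasDerivAt (fun z : ℂ => Complex.exp (Complex.I * (a : ℂ) * z))
        (Complex.I * a * E) (t : ℂ) := by
      simpa [hE, mul_comm] using ((hasDerivAt_id (t : ℂ)).const_mul (Complex.I * (a : ℂ))).cexp
    have h3 := (h2.comp_ofReal).const_mul C
    have h4 : (fun t' : ℝ => N₄ t' x) = fun t' : ℝ =>
        C * Complex.exp (Complex.I * (a : ℂ) * (t' : ℂ)) := by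
      funext t'; rw [hN₄]
    rw [h4]
    exact h3.deriv
  have hNx : deriv (fun x' => N₄ t x') x = 0 := by
    have h4 : (fun x' : ℝ => N₄ t x') = fun _ : ℝ =>
        C * Complex.exp (Complex.I * (a : ℂ) * (t : ℂ)) := by
      funext x'; rw [hN₄]
    rw [h4]; exact deriv_const _ _
  rw [hMx, hMt, hNt, hNx] at *
  constructor
  · rw [hN₄, hC, hlam₀]
    show _ = -(1 / a : ℝ) * (phi4Kink x : ℂ) * M₄c t x - _
    rw [M₄c, phi4Kink, ← ha_def, ← hT, ← hE]
    push_cast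
    field_simp
    ring_nf
    have h2 : ((Real.sqrt 2 : ℝ) : ℂ) * ((Real.sqrt 2 : ℝ) : ℂ) = 2 := by
      rw [← Complex.ofReal_mul, Real.mul_self_sqrt (by norm_num)]; norm_num
    have h3 : ((Real.sqrt 3 : ℝ) : ℂ) * ((Real.sqrt 3 : ℝ) : ℂ) = 3 := by
      rw [← Complex.ofReal_mul, Real.mul_self_sqrt (by norm_num)]; norm_num
    have hI : Complex.I ^ 2 = -1 := Complex.I_sq
    set s2 : ℂ := ((Real.sqrt 2 : ℝ) : ℂ)
    set s3 : ℂ := ((Real.sqrt 3 : ℝ) : ℂ)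
    linear_combination
      (E*(-2*s2*(ε:ℂ)*((Real.sqrt (3/2) : ℝ) : ℂ) + 2*s2^2 - s2^2*(ε:ℂ)^2*((Real.sqrt (3/2) : ℝ) : ℂ)^2 + s2^3*(ε:ℂ)*((Real.sqrt (3/2) : ℝ) : ℂ) + 2*s2^3*(ε:ℂ)*s3 + s2^3*(ε:ℂ)^2*s3^2 - 2*s2^5 - s2^5*(ε:ℂ)*s3) + E*(-2*s2^3*(ε:ℂ)*s3 - s2^3*(ε:ℂ)^2*s3^2 + 2*s2^5 + s2^5*(ε:ℂ)*s3)) * hI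
      + (E*(s2^2*((Real.sqrt (3/2) : ℝ) : ℂ)^2 - s2^3*s3^2) + E*s2^3*s3^2) * he
      + (E*s2^2) * hb
      + (-E*s2^3 + E*s2^3) * h3
      + (E*(-1/2 - s2*(ε:ℂ)*((Real.sqrt (3/2) : ℝ) : ℂ) + 2*s2^3 + s2^3*(ε:ℂ)*s3) - E*(2*s2^3 + s2^3*(ε:ℂ)*s3)) * h2
  · rw [hN₄, hC, hlam₀]
    show _ = -(1 / a : ℝ) * (phi4Kink x : ℂ) * _ - _
    rw [M₄c, phi4Kink, ← ha_def, ← hT, ← hE]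
    push_cast
    field_simp
    ring_nf
    linear_combination ((T : ℂ) * Complex.I * E) * ha
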